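/- arXiv:2406.15525 — 3 statements merged into one kernel-verified Lean document; each statement's English description precedes it below -/
import Mathlib

section
/- Let A = [[1,1],[0,1]] and B = [[1,0],[1,1]] in SL(2,ℤ). Then for every pair (n,p) of coprime positive integers, there exist a unique N > 0 and unique sequences of natural numbers (α₁,…,α_N) and (β₁,…,β_N) with α_i > 0 for i ≥ 2, β_i > 0 for i ≤ N−1 (α₁ and β_N may be zero), such that the vector (n,p) equals B^{β_N} A^{α_N} ⋯ B^{β₁} A^{α₁} applied to the vector (1,1). -/
open Matrix

def A : Matrix (Fin 2) (Fin 2) ℤ := !![1, 1; 0, 1]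
def B : Matrix (Fin 2) (Fin 2) ℤ := !![1, 0; 1, 1]

/-- The product `B^{β_N} A^{α_N} ⋯ B^{β₁} A^{α₁}`, where index `i : Fin N`
corresponds to `(α_{i+1}, β_{i+1})`. -/
def W (N : ℕ) (α β : Fin N → ℕ) : Matrix (Fin 2) (Fin 2) ℤ :=
  ((List.finRange N).reverse.map (fun i => B ^ β i * A ^ α i)).prod

lemma Apow (a : ℕ) : A ^ a = !![1, (a:ℤ); 0, 1] := by
  induction a with
  | zero => simp [Matrix.one_fin_two]
  | succ a ih => rw [pow_succ, ih, A, Matrix.mul_fin_two]; norm_num [add_comm]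

lemma Bpow (b : ℕ) : B ^ b = !![1, 0; (b:ℤ), 1] := by
  induction b with
  | zero => simp [Matrix.one_fin_two]
  | succ b ih => rw [pow_succ, ih, B, Matrix.mul_fin_two]; norm_num [add_comm]

lemma mulvec2 (m : Matrix (Fin 2) (Fin 2) ℤ) (x y : ℤ) :
    m.mulVec ![x, y] = ![m 0 0 * x + m 0 1 * y, m 1 0 * x + m 1 1 * y] := by
  funext i
  fin_cases i <;> simp [Matrix.mulVec, dotProduct, Fin.sum_univ_two]

lemma W_zero (α β : Fin 0 → ℕ) : W 0 α β = 1 := by simp [W]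

lemma W_succ (N : ℕ) (α β : Fin (N+1) → ℕ) :
    W (N+1) α β = B ^ β (Fin.last N) * A ^ α (Fin.last N) * W N (Fin.init α) (Fin.init β) := by
  unfold W
  rw [List.finRange_succ_last]
  simp only [List.reverse_append, List.reverse_singleton, List.singleton_append, List.map_cons,
    List.prod_cons, ← List.map_reverse, List.map_map]
  simp only [mul_assoc]
  rfl

def vW (N : ℕ) (α β : Fin N → ℕ) : Fin 2 → ℤ := (W N α β).mulVec ![1, 1]

lemma vW_zero (α β : Fin 0 → ℕ) : vW 0 α β = ![1, 1] := by
  simp [vW, W_zero, Matrix.one_mulVec]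

lemma vW_succ (N : ℕ) (α β : Fin (N+1) → ℕ) :
    vW (N+1) α β = ![vW N (Fin.init α) (Fin.init β) 0 + (α (Fin.last N) : ℤ) * vW N (Fin.init α) (Fin.init β) 1,
      (β (Fin.last N) : ℤ) * (vW N (Fin.init α) (Fin.init β) 0 + (α (Fin.last N) : ℤ) * vW N (Fin.init α) (Fin.init β) 1)
        + vW N (Fin.init α) (Fin.init β) 1] := by
  have h : vW N (Fin.init α) (Fin.init β) = ![vW N (Fin.init α) (Fin.init β) 0, vW N (Fin.init α) (Fin.init β) 1] := by
    funext i; fin_cases i <;> rfl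
  rw [vW, W_succ, ← Matrix.mulVec_mulVec, ← Matrix.mulVec_mulVec, ← vW, h, Apow, Bpow,
    mulvec2, mulvec2]
  funext i; fin_cases i <;> simp <;> ring

lemma vW_pos (N : ℕ) (α β : Fin N → ℕ) : 1 ≤ vW N α β 0 ∧ 1 ≤ vW N α β 1 := by
  induction N with
  | zero => rw [vW_zero]; norm_num
  | succ N ih =>
    obtain ⟨h0, h1⟩ := ih (Fin.init α) (Fin.init β)
    rw [vW_succ]
    have ha : (0:ℤ) ≤ (α (Fin.last N) : ℤ) := Int.natCast_nonneg _
    have hb : (0:ℤ) ≤ (β (Fin.last N) : ℤ) := Int.natCast_nonneg _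
    set x := vW N (Fin.init α) (Fin.init β) 0
    set y := vW N (Fin.init α) (Fin.init β) 1
    have k1 : (0:ℤ) ≤ (α (Fin.last N):ℤ) * y := mul_nonneg ha (by linarith)
    have k2 : (0:ℤ) ≤ (β (Fin.last N):ℤ) * (x + (α (Fin.last N):ℤ) * y) :=
      mul_nonneg hb (by linarith)
    refine ⟨?_, ?_⟩ <;> simp only [Matrix.cons_val_zero, Matrix.cons_val_one, Matrix.head_cons] <;> linarith

lemma myvec2_eq {a b c d : ℤ} (h1 : a = c) (h2 : b = d) : ![a, b] = ![c, d] := by rw [h1, h2]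

abbrev QQ := Σ N : ℕ, (Fin N → ℕ) × (Fin N → ℕ)

def Good (n p : ℕ) (q : QQ) : Prop :=
  0 < q.1 ∧
  (∀ i : Fin q.1, 1 ≤ (i : ℕ) → 0 < q.2.1 i) ∧
  (∀ i : Fin q.1, (i : ℕ) < q.1 - 1 → 0 < q.2.2 i) ∧
  vW q.1 q.2.1 q.2.2 = ![(n : ℤ), (p : ℤ)]

lemma sigma_eq {N : ℕ} {α β α' β' : Fin N → ℕ} (hα : α = α') (hβ : β = β') :
    (⟨N, α, β⟩ : QQ) = ⟨N, α', β'⟩ := by rw [hα, hβ]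

lemma good_eqs {n p M : ℕ} {α β : Fin (M+1) → ℕ} (h : Good n p ⟨M+1, α, β⟩) :
    (n:ℤ) = vW M (Fin.init α) (Fin.init β) 0 + (α (Fin.last M):ℤ) * vW M (Fin.init α) (Fin.init β) 1 ∧
    (p:ℤ) = (β (Fin.last M):ℤ) * (n:ℤ) + vW M (Fin.init α) (Fin.init β) 1 := by
  have hv : vW (M+1) α β = ![(n:ℤ), (p:ℤ)] := h.2.2.2
  rw [vW_succ] at hv
  have h0 := congrFun hv 0
  have h1 := congrFun hv 1
  simp only [Matrix.cons_val_zero, Matrix.cons_val_one, Matrix.head_cons] at h0 h1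
  refine ⟨h0.symm, ?_⟩
  rw [h0] at h1
  exact h1.symm

lemma vW0_zero (α β : Fin 1 → ℕ) : vW 0 (Fin.init α) (Fin.init β) 0 = 1 ∧ vW 0 (Fin.init α) (Fin.init β) 1 = 1 := by
  rw [vW_zero]; exact ⟨rfl, rfl⟩

/-- `n = p = 1` case analysis. -/
lemma facts_eq {M : ℕ} {α β : Fin (M+1) → ℕ} (h : Good 1 1 ⟨M+1, α, β⟩) :
    M = 0 ∧ α (Fin.last M) = 0 ∧ β (Fin.last M) = 0 := by
  obtain ⟨e1, e2⟩ := good_eqs h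
  obtain ⟨hx, hy⟩ := vW_pos M (Fin.init α) (Fin.init β)
  push_cast at e1 e2
  have ha : α (Fin.last M) = 0 := by
    by_contra h'
    have h1 : 1 ≤ (α (Fin.last M):ℤ) := by exact_mod_cast Nat.one_le_iff_ne_zero.mpr h'
    nlinarith
  have hb : β (Fin.last M) = 0 := by
    by_contra h'
    have h1 : 1 ≤ (β (Fin.last M):ℤ) := by exact_mod_cast Nat.one_le_iff_ne_zero.mpr h'
    nlinarith
  refine ⟨?_, ha, hb⟩
  by_contra h'
  have hcon : 0 < α (Fin.last M) := h.2.1 (Fin.last M) (by simp only [Fin.val_last]; omega)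
  omega

/-- `n > p` case analysis. -/
lemma facts_gt {n p M : ℕ} {α β : Fin (M+1) → ℕ} (hp : 0 < p) (hnp : p < n)
    (h : Good n p ⟨M+1, α, β⟩) : β (Fin.last M) = 0 ∧ 1 ≤ α (Fin.last M) := by
  obtain ⟨e1, e2⟩ := good_eqs h
  obtain ⟨hx, hy⟩ := vW_pos M (Fin.init α) (Fin.init β)
  have hn1 : (1:ℤ) ≤ (n:ℤ) := by exact_mod_cast Nat.one_le_iff_ne_zero.mpr (by omega)
  have hpn : (p:ℤ) < (n:ℤ) := by exact_mod_cast hnp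
  have hb : β (Fin.last M) = 0 := by
    by_contra h'
    have h1 : 1 ≤ (β (Fin.last M):ℤ) := by exact_mod_cast Nat.one_le_iff_ne_zero.mpr h'
    nlinarith [mul_le_mul_of_nonneg_right h1 (by linarith : (0:ℤ) ≤ (n:ℤ))]
  refine ⟨hb, ?_⟩
  by_contra h'
  have ha : α (Fin.last M) = 0 := by omega
  simp only [ha, hb] at e1 e2
  push_cast at e1 e2
  rcases Nat.eq_zero_or_pos M with hM | hM
  · subst hM
    have u : vW 0 (Fin.init α) (Fin.init β) 0 = 1 := by rw [vW_zero]; rfl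
    have v : vW 0 (Fin.init α) (Fin.init β) 1 = 1 := by rw [vW_zero]; rfl
    rw [u] at e1
    rw [v] at e2
    omega
  · have hcon : 0 < α (Fin.last M) := h.2.1 (Fin.last M) (by simp only [Fin.val_last]; omega)
    omega

/-- `n < p` case analysis. -/
lemma facts_lt {n p M : ℕ} {α β : Fin (M+1) → ℕ} (hn : 0 < n) (hnp : n < p)
    (h : Good n p ⟨M+1, α, β⟩) : 1 ≤ β (Fin.last M) := by
  obtain ⟨e1, e2⟩ := good_eqs h
  obtain ⟨hx, hy⟩ := vW_pos M (Fin.init α) (Fin.init β)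
  have hpn : (n:ℤ) < (p:ℤ) := by exact_mod_cast hnp
  by_contra h'
  have hb : β (Fin.last M) = 0 := by omega
  simp only [hb] at e2
  push_cast at e2
  -- p = y
  have ha : α (Fin.last M) = 0 := by
    by_contra h''
    have h1 : 1 ≤ (α (Fin.last M):ℤ) := by exact_mod_cast Nat.one_le_iff_ne_zero.mpr h''
    nlinarith [mul_le_mul_of_nonneg_right h1 (by linarith : (0:ℤ) ≤ vW M (Fin.init α) (Fin.init β) 1)]
  simp only [ha] at e1
  push_cast at e1
  rcases Nat.eq_zero_or_pos M with hM | hM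
  · subst hM
    have u : vW 0 (Fin.init α) (Fin.init β) 0 = 1 := by rw [vW_zero]; rfl
    have v : vW 0 (Fin.init α) (Fin.init β) 1 = 1 := by rw [vW_zero]; rfl
    rw [u] at e1
    rw [v] at e2
    omega
  · have hcon : 0 < α (Fin.last M) := h.2.1 (Fin.last M) (by simp only [Fin.val_last]; omega)
    omega

lemma init_if {M : ℕ} (β : Fin (M+1) → ℕ) (f : ℕ → ℕ) :
    Fin.init (fun i : Fin (M+1) => if (i:ℕ) = M then f (β i) else β i) = Fin.init β := by
  funext i
  have hne : ((Fin.castSucc i : Fin (M+1)) : ℕ) ≠ M := by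
    have := i.isLt; simp only [Fin.coe_castSucc]; omega
  simp only [Fin.init]
  rw [if_neg hne]

lemma if_last {M : ℕ} (β : Fin (M+1) → ℕ) (f : ℕ → ℕ) :
    (fun i : Fin (M+1) => if (i:ℕ) = M then f (β i) else β i) (Fin.last M) = f (β (Fin.last M)) := by
  simp [Fin.val_last]

def decB (q : QQ) : QQ := ⟨q.1, q.2.1, fun i => if (i:ℕ) = q.1 - 1 then q.2.2 i - 1 else q.2.2 i⟩
def incB (q : QQ) : QQ := ⟨q.1, q.2.1, fun i => if (i:ℕ) = q.1 - 1 then q.2.2 i + 1 else q.2.2 i⟩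

lemma transfer {X Y : Type*} {P : X → Prop} {Q : Y → Prop} (f : X → Y) (g : Y → X)
    (hQ : ∃! y, Q y) (hf : ∀ x, P x → Q (f x)) (hg : ∀ y, Q y → P (g y))
    (hgf : ∀ x, P x → g (f x) = x) : ∃! x, P x := by
  obtain ⟨y₀, hy₀, hyu⟩ := hQ
  refine ⟨g y₀, hg _ hy₀, fun x hx => ?_⟩
  rw [← hgf x hx, hyu (f x) (hf x hx)]

lemma good_decB {n p : ℕ} (hn : 0 < n) (hnp : n < p) (q : QQ) (h : Good n p q) :
    Good n (p - n) (decB q) := by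
  obtain ⟨N, α, β⟩ := q
  obtain ⟨M, rfl⟩ : ∃ M, N = M + 1 := ⟨N - 1, by have h1 : 0 < N := h.1; omega⟩
  have hb1 := facts_lt hn hnp h
  obtain ⟨e1, e2⟩ := good_eqs h
  obtain ⟨hx, hy⟩ := vW_pos M (Fin.init α) (Fin.init β)
  show Good n (p - n) ⟨M+1, α, fun i => if (i:ℕ) = M then β i - 1 else β i⟩
  refine ⟨Nat.succ_pos M, h.2.1, fun i hi => ?_, ?_⟩
  · have hne : (i:ℕ) ≠ M := by simp only at hi; omega
    simpa [hne] using h.2.2.1 i hi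
  · show vW (M+1) α (fun i => if (i:ℕ) = M then β i - 1 else β i) = ![(n:ℤ), ((p-n : ℕ):ℤ)]
    rw [vW_succ, init_if β (fun t => t - 1)]
    rw [if_pos (Fin.val_last M)]
    refine myvec2_eq e1.symm ?_
    rw [Nat.cast_sub hb1, Nat.cast_sub hnp.le, ← e1]
    ring_nf
    ring_nf at e2
    linarith

lemma good_incB {n p : ℕ} (hn : 0 < n) (hnp : n < p) (q : QQ) (h : Good n (p - n) q) :
    Good n p (incB q) := by
  obtain ⟨N, α, β⟩ := q
  obtain ⟨M, rfl⟩ : ∃ M, N = M + 1 := ⟨N - 1, by have h1 : 0 < N := h.1; omega⟩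
  obtain ⟨e1, e2⟩ := good_eqs h
  obtain ⟨hx, hy⟩ := vW_pos M (Fin.init α) (Fin.init β)
  rw [Nat.cast_sub hnp.le] at e2
  show Good n p ⟨M+1, α, fun i => if (i:ℕ) = M then β i + 1 else β i⟩
  refine ⟨Nat.succ_pos M, h.2.1, fun i hi => ?_, ?_⟩
  · have hne : (i:ℕ) ≠ M := by simp only at hi; omega
    simpa [hne] using h.2.2.1 i hi
  · show vW (M+1) α (fun i => if (i:ℕ) = M then β i + 1 else β i) = ![(n:ℤ), (p:ℤ)]
    rw [vW_succ, init_if β (fun t => t + 1)]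
    rw [if_pos (Fin.val_last M)]
    refine myvec2_eq e1.symm ?_
    push_cast
    rw [← e1]
    ring_nf
    ring_nf at e2
    linarith

lemma incB_decB {n p : ℕ} (hn : 0 < n) (hnp : n < p) (q : QQ) (h : Good n p q) :
    incB (decB q) = q := by
  obtain ⟨N, α, β⟩ := q
  obtain ⟨M, rfl⟩ : ∃ M, N = M + 1 := ⟨N - 1, by have h1 : 0 < N := h.1; omega⟩
  have hb1 := facts_lt hn hnp h
  show (⟨M+1, α, fun i => if (i:ℕ) = M then
      (if (i:ℕ) = M then β i - 1 else β i) + 1 else (if (i:ℕ) = M then β i - 1 else β i)⟩ : QQ)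
      = ⟨M+1, α, β⟩
  refine sigma_eq rfl (funext fun i => ?_)
  by_cases hi : (i:ℕ) = M
  · have : i = Fin.last M := Fin.ext (by simp [hi, Fin.val_last])
    subst this
    simp only [if_pos hi]
    omega
  · simp only [if_neg hi]

def peel : QQ → QQ
  | ⟨0, α, β⟩ => ⟨0, α, β⟩
  | ⟨M+1, α, β⟩ =>
    if 1 ≤ M ∧ α (Fin.last M) = 1 then ⟨M, Fin.init α, Fin.init β⟩
    else ⟨M+1, Function.update α (Fin.last M) (α (Fin.last M) - 1), β⟩

def unpeel : QQ → QQ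
  | ⟨0, α, β⟩ => ⟨0, α, β⟩
  | ⟨M+1, α, β⟩ =>
    if β (Fin.last M) = 0 then ⟨M+1, Function.update α (Fin.last M) (α (Fin.last M) + 1), β⟩
    else ⟨M+2, Fin.snoc α 1, Fin.snoc β 0⟩

lemma good_peel {n p : ℕ} (hp : 0 < p) (hnp : p < n) (q : QQ) (h : Good n p q) :
    Good (n - p) p (peel q) := by
  obtain ⟨N, α, β⟩ := q
  obtain ⟨M, rfl⟩ : ∃ M, N = M + 1 := ⟨N - 1, by have h1 : 0 < N := h.1; omega⟩
  obtain ⟨hb, ha⟩ := facts_gt hp hnp h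
  obtain ⟨e1, e2⟩ := good_eqs h
  obtain ⟨hx, hy⟩ := vW_pos M (Fin.init α) (Fin.init β)
  rw [hb] at e2
  push_cast at e2
  -- y = p
  by_cases hc : 1 ≤ M ∧ α (Fin.last M) = 1
  · rw [show peel ⟨M+1, α, β⟩ = ⟨M, Fin.init α, Fin.init β⟩ from by simp [peel, hc]]
    refine ⟨hc.1, fun i hi => ?_, fun i hi => ?_, ?_⟩
    · exact h.2.1 (Fin.castSucc i) (by simpa using hi)
    · refine h.2.2.1 (Fin.castSucc i) ?_
      simp only [Fin.coe_castSucc] at hi ⊢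
      omega
    · show vW M (Fin.init α) (Fin.init β) = _
      have h2 : vW M (Fin.init α) (Fin.init β) = ![vW M (Fin.init α) (Fin.init β) 0, vW M (Fin.init α) (Fin.init β) 1] := by
        funext i; fin_cases i <;> rfl
      rw [h2]
      refine myvec2_eq ?_ ?_
      · rw [hc.2] at e1
        rw [Nat.cast_sub hnp.le]
        push_cast at e1
        linarith
      · linarith
  · rw [show peel ⟨M+1, α, β⟩ = ⟨M+1, Function.update α (Fin.last M) (α (Fin.last M) - 1), β⟩ from by simp [peel, hc]]
    refine ⟨Nat.succ_pos M, fun i hi => ?_, h.2.2.1, ?_⟩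
    · show 0 < Function.update α (Fin.last M) (α (Fin.last M) - 1) i
      by_cases hi' : i = Fin.last M
      · subst hi'
        rw [Function.update_self]
        simp only [Fin.val_last] at hi
        have : α (Fin.last M) ≠ 1 := fun h' => hc ⟨hi, h'⟩
        omega
      · rw [Function.update_of_ne hi']
        exact h.2.1 i hi
    · show vW (M+1) (Function.update α (Fin.last M) (α (Fin.last M) - 1)) β = _
      rw [vW_succ, Fin.init_update_last, Function.update_self]
      refine myvec2_eq ?_ ?_
      · rw [Nat.cast_sub hnp.le, Nat.cast_sub ha]
        ring_nf
        ring_nf at e1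
        linarith
      · rw [hb]
        push_cast
        linarith

lemma good_unpeel {n p : ℕ} (hp : 0 < p) (hnp : p < n) (q : QQ) (h : Good (n - p) p q) :
    Good n p (unpeel q) := by
  obtain ⟨N, α, β⟩ := q
  obtain ⟨M, rfl⟩ : ∃ M, N = M + 1 := ⟨N - 1, by have h1 : 0 < N := h.1; omega⟩
  obtain ⟨e1, e2⟩ := good_eqs h
  obtain ⟨hx, hy⟩ := vW_pos M (Fin.init α) (Fin.init β)
  rw [Nat.cast_sub hnp.le] at e1 e2
  by_cases hb' : β (Fin.last M) = 0
  · rw [show unpeel ⟨M+1, α, β⟩ = ⟨M+1, Function.update α (Fin.last M) (α (Fin.last M) + 1), β⟩ from by simp [unpeel, hb']]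
    refine ⟨Nat.succ_pos M, fun i hi => ?_, h.2.2.1, ?_⟩
    · show 0 < Function.update α (Fin.last M) (α (Fin.last M) + 1) i
      by_cases hi' : i = Fin.last M
      · subst hi'; rw [Function.update_self]; omega
      · rw [Function.update_of_ne hi']; exact h.2.1 i hi
    · show vW (M+1) (Function.update α (Fin.last M) (α (Fin.last M) + 1)) β = _
      rw [vW_succ, Fin.init_update_last, Function.update_self]
      rw [hb'] at e2
      push_cast at e2
      refine myvec2_eq ?_ ?_
      · push_cast
        ring_nf
        ring_nf at e1
        linarith
      · rw [hb']
        push_cast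
        linarith
  · rw [show unpeel ⟨M+1, α, β⟩ = ⟨M+2, Fin.snoc α 1, Fin.snoc β 0⟩ from by simp [unpeel, hb']]
    have hv0 : vW (M+1) α β 0 = ((n - p : ℕ) : ℤ) := by
      rw [show vW (M+1) α β = ![((n-p:ℕ):ℤ), (p:ℤ)] from h.2.2.2]; rfl
    have hv1 : vW (M+1) α β 1 = (p : ℤ) := by
      rw [show vW (M+1) α β = ![((n-p:ℕ):ℤ), (p:ℤ)] from h.2.2.2]; rfl
    refine ⟨Nat.succ_pos (M+1), fun i hi => ?_, fun i hi => ?_, ?_⟩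
    · show 0 < (Fin.snoc α 1 : Fin (M+2) → ℕ) i
      by_cases hi' : i = Fin.last (M+1)
      · subst hi'; rw [Fin.snoc_last]; omega
      · obtain ⟨j, rfl⟩ := Fin.exists_castSucc_eq.mpr hi'
        rw [Fin.snoc_castSucc]
        exact h.2.1 j (by simpa using hi)
    · show 0 < (Fin.snoc β 0 : Fin (M+2) → ℕ) i
      have hi2 : (i : ℕ) < M + 1 := by simpa using hi
      have hi' : i ≠ Fin.last (M+1) := by
        intro h'; subst h'; simp only [Fin.val_last] at hi2; omega
      obtain ⟨j, rfl⟩ := Fin.exists_castSucc_eq.mpr hi'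
      rw [Fin.snoc_castSucc]
      rcases Nat.lt_or_ge (j : ℕ) M with hj | hj
      · exact h.2.2.1 j (by simpa using hj)
      · have : j = Fin.last M := Fin.ext (by have := j.isLt; simp only [Fin.val_last]; omega)
        subst this
        omega
    · show vW (M+2) (Fin.snoc α 1) (Fin.snoc β 0) = _
      rw [vW_succ, Fin.init_snoc, Fin.init_snoc, Fin.snoc_last, Fin.snoc_last, hv0, hv1]
      refine myvec2_eq ?_ ?_
      · rw [Nat.cast_sub hnp.le]; push_cast; ring
      · rw [Nat.cast_sub hnp.le]; push_cast; ring

lemma unpeel_peel {n p : ℕ} (hp : 0 < p) (hnp : p < n) (q : QQ) (h : Good n p q) :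
    unpeel (peel q) = q := by
  obtain ⟨N, α, β⟩ := q
  obtain ⟨M, rfl⟩ : ∃ M, N = M + 1 := ⟨N - 1, by have h1 : 0 < N := h.1; omega⟩
  obtain ⟨hb, ha⟩ := facts_gt hp hnp h
  by_cases hc : 1 ≤ M ∧ α (Fin.last M) = 1
  · obtain ⟨M', rfl⟩ : ∃ M', M = M' + 1 := ⟨M - 1, by omega⟩
    rw [show peel ⟨M'+1+1, α, β⟩ = ⟨M'+1, Fin.init α, Fin.init β⟩ from by simp [peel, hc]]
    have hbpos : Fin.init β (Fin.last M') ≠ 0 := by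
      have h2 : 0 < β (Fin.castSucc (Fin.last M')) :=
        h.2.2.1 (Fin.castSucc (Fin.last M')) (by simp [Fin.coe_castSucc, Fin.val_last])
      simp only [Fin.init]
      omega
    rw [show unpeel ⟨M'+1, Fin.init α, Fin.init β⟩
        = ⟨M'+2, Fin.snoc (Fin.init α) 1, Fin.snoc (Fin.init β) 0⟩ from by simp [unpeel, hbpos]]
    refine sigma_eq ?_ ?_
    · have h3 := Fin.snoc_init_self α
      rw [hc.2] at h3
      exact h3
    · have h3 := Fin.snoc_init_self β
      rw [hb] at h3
      exact h3
  · rw [show peel ⟨M+1, α, β⟩ = ⟨M+1, Function.update α (Fin.last M) (α (Fin.last M) - 1), β⟩ from by simp [peel, hc]]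
    rw [show unpeel ⟨M+1, Function.update α (Fin.last M) (α (Fin.last M) - 1), β⟩
        = ⟨M+1, Function.update (Function.update α (Fin.last M) (α (Fin.last M) - 1)) (Fin.last M)
            ((Function.update α (Fin.last M) (α (Fin.last M) - 1)) (Fin.last M) + 1), β⟩ from by simp [unpeel, hb]]
    refine sigma_eq ?_ rfl
    rw [Function.update_self, Function.update_idem]
    rw [show α (Fin.last M) - 1 + 1 = α (Fin.last M) from by omega]
    exact Function.update_eq_self _ _

lemma main : ∀ s n p : ℕ, n + p ≤ s → 0 < n → 0 < p → Nat.Coprime n p → ∃! q : QQ, Good n p q := by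
  intro s
  induction s with
  | zero => intro n p hs hn hp _; omega
  | succ s ih =>
    intro n p hs hn hp hc
    rcases lt_trichotomy n p with hlt | heq | hgt
    · have hcop : Nat.Coprime n (p - n) :=
        (((Nat.coprime_sub_self_left hlt.le).mpr hc.symm)).symm
      have hU := ih n (p - n) (by omega) hn (by omega) hcop
      exact transfer decB incB hU (fun q hq => good_decB hn hlt q hq)
        (fun q hq => good_incB hn hlt q hq) (fun q hq => incB_decB hn hlt q hq)
    · subst heq
      have h1 : n = 1 := (Nat.coprime_self n).mp hc
      subst h1
      refine ⟨⟨1, fun _ => 0, fun _ => 0⟩, ⟨Nat.one_pos, ?_, ?_, ?_⟩, ?_⟩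
      · intro i hi; have h2 : (i:ℕ) < 1 := i.isLt; omega
      · intro i hi; have h2 : (i:ℕ) < 1 - 1 := hi; omega
      · show vW 1 (fun _ => 0) (fun _ => 0) = ![(1:ℤ), (1:ℤ)]
        rw [vW_succ, vW_zero]
        norm_num
      · intro q hq
        obtain ⟨N, α, β⟩ := q
        obtain ⟨M, rfl⟩ : ∃ M, N = M + 1 := ⟨N - 1, by have h1 : 0 < N := hq.1; omega⟩
        obtain ⟨hM, ha, hb⟩ := facts_eq hq
        subst hM
        refine sigma_eq ?_ ?_
        · funext i
          have hi : i = Fin.last 0 := Fin.ext (by have := i.isLt; simp only [Fin.val_last]; omega)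
          rw [hi, ha]
        · funext i
          have hi : i = Fin.last 0 := Fin.ext (by have := i.isLt; simp only [Fin.val_last]; omega)
          rw [hi, hb]
    · have hcop : Nat.Coprime (n - p) p := (Nat.coprime_sub_self_left hgt.le).mpr hc
      have hU := ih (n - p) p (by omega) (by omega) hp hcop
      exact transfer peel unpeel hU (fun q hq => good_peel hp hgt q hq)
        (fun q hq => good_unpeel hp hgt q hq) (fun q hq => unpeel_peel hp hgt q hq)

theorem stmt0 (n p : ℕ) (hn : 0 < n) (hp : 0 < p) (h : Nat.Coprime n p) :
    ∃! q : Σ N : ℕ, (Fin N → ℕ) × (Fin N → ℕ),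
      0 < q.1 ∧
      (∀ i : Fin q.1, 1 ≤ (i : ℕ) → 0 < q.2.1 i) ∧
      (∀ i : Fin q.1, (i : ℕ) < q.1 - 1 → 0 < q.2.2 i) ∧
      (W q.1 q.2.1 q.2.2).mulVec ![1, 1] = ![(n : ℤ), (p : ℤ)] := by
  exact main (n + p) n p le_rfl hn hp h
end

section
/- Let M = [[a,b],[c,d]] be a matrix in SL(2,ℤ) with all coefficients nonnegative and M ≠ identity. Then M can be written as a product of the matrices A = [[1,1],[0,1]] and B = [[1,0],[1,1]] (a nonempty word in A and B with nonnegative exponents). -/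
open Matrix

lemma mat_eq_iff (x y z w p q r s : ℤ) :
    !![x, y; z, w] = !![p, q; r, s] ↔ x = p ∧ y = q ∧ z = r ∧ w = s := by
  constructor
  · intro h
    refine ⟨?_, ?_, ?_, ?_⟩
    · simpa using congr_fun (congr_fun h 0) 0
    · simpa using congr_fun (congr_fun h 0) 1
    · simpa using congr_fun (congr_fun h 1) 0
    · simpa using congr_fun (congr_fun h 1) 1
  · rintro ⟨rfl, rfl, rfl, rfl⟩; rfl

lemma key : ∀ n : ℕ, ∀ a b c d : ℤ, a * d - b * c = 1 → 0 ≤ a → 0 ≤ b → 0 ≤ c → 0 ≤ d →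
    !![a, b; c, d] ≠ (1 : Matrix (Fin 2) (Fin 2) ℤ) → (a + b + c + d).toNat ≤ n →
    ∃ l : List (Matrix (Fin 2) (Fin 2) ℤ),
      l ≠ [] ∧ (∀ X ∈ l, X = A ∨ X = B) ∧ l.prod = !![a, b; c, d] := by
  intro n
  induction n with
  | zero =>
    intro a b c d hdet ha hb hc hd hne hsum
    exfalso
    have h0 : a = 0 ∧ b = 0 ∧ c = 0 ∧ d = 0 := by omega
    obtain ⟨rfl, rfl, rfl, rfl⟩ := h0
    simp at hdet
  | succ n ih =>
    intro a b c d hdet ha hb hc hd hne hsum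
    have hone : (1 : Matrix (Fin 2) (Fin 2) ℤ) = !![1, 0; 0, 1] := Matrix.one_fin_two
    by_cases h1 : c ≤ a ∧ d ≤ b
    · obtain ⟨hca, hdb⟩ := h1
      by_cases hMA : a = 1 ∧ b = 1 ∧ c = 0 ∧ d = 1
      · obtain ⟨rfl, rfl, rfl, rfl⟩ := hMA
        exact ⟨[A], by simp, by simp, by simp [A]⟩
      · -- recurse with M' = A⁻¹ M
        have hd' : (a - c) * d - (b - d) * c = 1 := by linarith [hdet]; 
        have hnz : ¬ (c = 0 ∧ d = 0) := by
          rintro ⟨rfl, rfl⟩; simp at hdet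
        have hne' : !![a - c, b - d; c, d] ≠ (1 : Matrix (Fin 2) (Fin 2) ℤ) := by
          intro h; rw [hone, mat_eq_iff] at h; exact hMA (by omega)
        obtain ⟨l, hl1, hl2, hl3⟩ := ih (a - c) (b - d) c d hd' (by linarith) (by linarith) hc hd hne' (by omega)
        refine ⟨A :: l, by simp, ?_, ?_⟩
        · intro X hX
          rcases List.mem_cons.mp hX with h | h
          · exact Or.inl h
          · exact hl2 X h
        · rw [List.prod_cons, hl3]
          ext i j
          fin_cases i <;> fin_cases j <;>
            simp [A, Matrix.mul_apply, Fin.sum_univ_two] <;> ring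
    · by_cases h2 : a ≤ c ∧ b ≤ d
      · obtain ⟨hac, hbd⟩ := h2
        by_cases hMB : a = 1 ∧ b = 0 ∧ c = 1 ∧ d = 1
        · obtain ⟨rfl, rfl, rfl, rfl⟩ := hMB
          exact ⟨[B], by simp, by simp, by simp [B]⟩
        · have hd' : a * (d - b) - b * (c - a) = 1 := by linarith [hdet]
          have hnz : ¬ (a = 0 ∧ b = 0) := by
            rintro ⟨rfl, rfl⟩; simp at hdet
          have hne' : !![a, b; c - a, d - b] ≠ (1 : Matrix (Fin 2) (Fin 2) ℤ) := by
            intro h; rw [hone, mat_eq_iff] at h; exact hMB (by omega)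
          obtain ⟨l, hl1, hl2, hl3⟩ := ih a b (c - a) (d - b) hd' ha hb (by linarith) (by linarith) hne' (by omega)
          refine ⟨B :: l, by simp, ?_, ?_⟩
          · intro X hX
            rcases List.mem_cons.mp hX with h | h
            · exact Or.inr h
            · exact hl2 X h
          · rw [List.prod_cons, hl3]
            ext i j
            fin_cases i <;> fin_cases j <;>
              simp [B, Matrix.mul_apply, Fin.sum_univ_two] <;> ring
      · exfalso
        push_neg at h1 h2
        -- From failures of both dominations: (a < c ∨ b < d) and (c < a ∨ d < b)
        have hcase : (a < c ∧ d < b) ∨ (c < a ∧ b < d) := by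
          by_cases hca : c ≤ a
          · right
            constructor
            · rcases lt_or_eq_of_le hca with h | h
              · exact h
              · exfalso
                subst h
                have hbd := h1 le_rfl
                have hdb := h2 le_rfl
                omega
            · by_contra hbd
              push_neg at hbd
              exact absurd (h1 hca) (not_lt.mpr hbd)
          · push_neg at hca
            left
            refine ⟨hca, ?_⟩
            by_contra hdb
            push_neg at hdb
            exact absurd (h2 hca.le) (not_lt.mpr hdb)
        rcases hcase with ⟨h3, h4⟩ | ⟨h3, h4⟩
        · -- a < c, d < b : det ≤ -(a+d+1) < 0
          nlinarith [mul_le_mul (by linarith : a + 1 ≤ c) (by linarith : d + 1 ≤ b) (by linarith) (by linarith)]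
        · -- c < a, b < d : forces b = c = 0, a = d = 1, so M = 1
          have hbc0 : b + c ≤ 0 := by
            nlinarith [mul_le_mul (by linarith : c + 1 ≤ a) (by linarith : b + 1 ≤ d) (by linarith) (by linarith)]
          have hb0 : b = 0 := by omega
          have hc0 : c = 0 := by omega
          subst hb0; subst hc0
          have had : a * d = 1 := by linarith
          have ha1 : a ≤ 1 := by nlinarith
          have hd1 : d ≤ 1 := by nlinarith
          have ha1' : a = 1 := by omega
          have hd1' : d = 1 := by omega
          subst ha1'; subst hd1'
          exact hne hone.symm

theorem stmt1 (M : Matrix (Fin 2) (Fin 2) ℤ) (hdet : M.det = 1)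
    (hpos : ∀ i j, 0 ≤ M i j) (hne : M ≠ 1) :
    ∃ l : List (Matrix (Fin 2) (Fin 2) ℤ),
      l ≠ [] ∧ (∀ X ∈ l, X = A ∨ X = B) ∧ l.prod = M := by
  have hM : M = !![M 0 0, M 0 1; M 1 0, M 1 1] := Matrix.etaExpand_eq M ▸ rfl
  rw [Matrix.det_fin_two] at hdet
  rw [hM] at hne ⊢
  exact key (M 0 0 + M 0 1 + M 1 0 + M 1 1).toNat _ _ _ _ hdet
    (hpos 0 0) (hpos 0 1) (hpos 1 0) (hpos 1 1) hne le_rfl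
end

section
/- Define sequences by the extended Euclidean recursion: given positive integers q₀, q₁, define a_i and q_{i+2} by q_i = a_i q_{i+1} + q_{i+2} with q_{i+1} ≥ q_{i+2} > 0, stopping at the first index K with q_{K+1} = q_{K+2}; and define u₀ = u₁ = 1, u_{i+2} = a_i u_{i+1} + u_i. Then with d = gcd(q₀, q₁) one has (u_{K+3} + u_{K+2})·d = q₀ + q₁. -/
/-- Extended Euclidean recursion: `q i = a i * q (i+1) + q (i+2)` with
`q (i+1) ≥ q (i+2) > 0`, stopping at the first index `K` with
`q (K+1) = q (K+2)`; the coefficient sequence is padded with `a (K+1) = 0`.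
With `u 0 = u 1 = 1` and `u (i+2) = a i * u (i+1) + u i`, one has
`(u (K+3) + u (K+2)) * gcd (q 0) (q 1) = q 0 + q 1`. -/
theorem stmt13 (K : ℕ) (q a u : ℕ → ℕ)
    (hq0 : 0 < q 0) (hq1 : 0 < q 1)
    (hrec : ∀ i ≤ K, q i = a i * q (i + 1) + q (i + 2))
    (hord : ∀ i ≤ K, 0 < q (i + 2) ∧ q (i + 2) ≤ q (i + 1))
    (hstop : q (K + 1) = q (K + 2))
    (hfirst : ∀ i < K, q (i + 1) ≠ q (i + 2))
    (hpad : a (K + 1) = 0)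
    (hu0 : u 0 = 1) (hu1 : u 1 = 1)
    (hu : ∀ i, u (i + 2) = a i * u (i + 1) + u i) :
    (u (K + 3) + u (K + 2)) * Nat.gcd (q 0) (q 1) = q 0 + q 1 := by
  -- invariant: u(i+1)*q i + u i * q(i+1) = q 0 + q 1
  have hf : ∀ i, i ≤ K + 1 → u (i + 1) * q i + u i * q (i + 1) = q 0 + q 1 := by
    intro i hi
    induction i with
    | zero => rw [hu0, hu1]; ring
    | succ n ih =>
      have hn : n ≤ K := Nat.lt_succ_iff.mp hi
      have := ih (Nat.le_succ_of_le hn)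
      have h2 : u (n + 1 + 1) = a n * u (n + 1) + u n := hu n
      have h3 : q n = a n * q (n + 1) + q (n + 1 + 1) := hrec n hn
      nlinarith [this, h2, h3]
  -- gcd invariant
  have hg : ∀ i, i ≤ K + 1 → Nat.gcd (q i) (q (i + 1)) = Nat.gcd (q 0) (q 1) := by
    intro i hi
    induction i with
    | zero => rfl
    | succ n ih =>
      have hn : n ≤ K := Nat.lt_succ_iff.mp hi
      rw [← ih (Nat.le_succ_of_le hn), hrec n hn,
        Nat.gcd_mul_right_add_left, Nat.gcd_comm]
  have hd : Nat.gcd (q 0) (q 1) = q (K + 1) := by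
    rw [← hg (K + 1) le_rfl, ← hstop, Nat.gcd_self]
  have h3 : u (K + 3) = u (K + 1) := by
    have := hu (K + 1)
    rw [hpad] at this
    simpa using this
  rw [h3, hd, ← hf (K + 1) le_rfl, hstop]
  ring
end
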